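/- With A^- = (A*)^{-1}/(q-1) + (A*)^{-1}L and y^{↓↓} = ∑_{z ≤ y} ẑ for y ∈ X, one has A^- y^{↓↓} = (q^{dim y}/(q-1)) y^{↓↓}; consequently A^- is diagonalizable with eigenvalues q^i/(q-1) for 0 ≤ i ≤ N, and the eigenspace for q^i/(q-1) has dimension binom(N,i)_q. -/

import Mathlib

open Matrix

noncomputable section
open scoped Classical

variable (F : Type) [Field F] [Fintype F] (N : ℕ)

/-- The vertex set: all subspaces of the `N`-dimensional vector space over `GF(q)`. -/
abbrev X := Submodule F (Fin N → F)

noncomputable instance : Fintype (X F N) := Fintype.ofFinite _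

/-- The dimension of a subspace. -/
def dimS (y : X F N) : ℕ := Module.finrank F y

/-- `y` covers `z` : `z ⊆ y` and `dim y = dim z + 1`. -/
def Covers (y z : X F N) : Prop := z ≤ y ∧ dimS F N y = dimS F N z + 1

/-- The raising matrix `R`. -/
def R : Matrix (X F N) (X F N) ℂ := fun y z => if Covers F N y z then 1 else 0

/-- The lowering matrix `L = Rᵗ`. -/
def L : Matrix (X F N) (X F N) ℂ := (R F N)ᵀ

/-- The diagonal matrix `A*` with `(y,y)`-entry `q^{-dim y}`. -/
def Astar : Matrix (X F N) (X F N) ℂ :=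
  Matrix.diagonal fun y => (Fintype.card F : ℂ) ^ (-(dimS F N y : ℤ))


/-- `y^{↓↓} = ∑_{z ≤ y} ẑ` in `V = ℂ^X`. -/
def dd (y : X F N) : X F N → ℂ :=
  ∑ z ∈ Finset.univ.filter (fun z : X F N => z ≤ y), Pi.single z (1 : ℂ)

/-- `[n]_q = (q^n - 1)/(q - 1)`. -/
def qInt (q n : ℕ) : ℕ := (q ^ n - 1) / (q - 1)

/-- `[n]_q!`. -/
def qFact (q n : ℕ) : ℕ := ∏ j ∈ Finset.range n, qInt q (j + 1)

/-- The Gaussian binomial coefficient `binom(N,i)_q`. -/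
def qBinom (q N i : ℕ) : ℕ := qFact q N / (qFact q i * qFact q (N - i))


namespace Stmt17Aux

open Module Submodule Finset

/-- `g q m = ∏_{j=1}^m (q^j - 1)`. -/
def gProd (q m : ℕ) : ℕ := ∏ j ∈ Finset.range m, (q ^ (j + 1) - 1)

lemma qInt_mul (q : ℕ) (hq : 2 ≤ q) (n : ℕ) : qInt q n * (q - 1) = q ^ n - 1 := by
  have h : (q - 1) ∣ q ^ n - 1 := by simpa using Nat.sub_dvd_pow_sub_pow q 1 n
  rw [qInt, Nat.div_mul_cancel h]

lemma qFact_mul (q : ℕ) (hq : 2 ≤ q) (m : ℕ) : qFact q m * (q - 1) ^ m = gProd q m := by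
  calc qFact q m * (q - 1) ^ m = ∏ j ∈ Finset.range m, (qInt q (j+1) * (q - 1)) := by
        rw [Finset.prod_mul_distrib, Finset.prod_const, Finset.card_range, qFact]
    _ = gProd q m := Finset.prod_congr rfl fun j _ => qInt_mul q hq _

lemma prod_sub_pow (q : ℕ) (hq : 2 ≤ q) {i m : ℕ} (him : i ≤ m) :
    ∏ j ∈ Finset.range i, (q ^ m - q ^ j)
      = q ^ (∑ j ∈ Finset.range i, j) * ∏ j ∈ Finset.range i, (q ^ (m - j) - 1) := by
  rw [← Finset.prod_pow_eq_pow_sum, ← Finset.prod_mul_distrib]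
  refine Finset.prod_congr rfl fun j hj => ?_
  have hjm : j ≤ m := by have := Finset.mem_range.mp hj; omega
  rw [Nat.mul_sub, mul_one, ← pow_add]
  congr 2
  omega

lemma prod_shift (q : ℕ) {i m : ℕ} (him : i ≤ m) :
    (∏ j ∈ Finset.range i, (q ^ (m - j) - 1)) * gProd q (m - i) = gProd q m := by
  induction i with
  | zero => simp [gProd]
  | succ k ih =>
    have hk : k ≤ m := by omega
    rw [Finset.prod_range_succ]
    have h1 : m - k = (m - (k+1)) + 1 := by omega
    have h2 : gProd q (m - k) = gProd q (m - (k+1)) * (q ^ (m - k) - 1) := by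
      rw [h1, gProd, gProd, Finset.prod_range_succ, ← h1]
    calc (∏ j ∈ Finset.range k, (q ^ (m - j) - 1)) * (q ^ (m - k) - 1) * gProd q (m - (k+1))
        = (∏ j ∈ Finset.range k, (q ^ (m - j) - 1)) * gProd q (m - k) := by rw [h2]; ring
      _ = gProd q m := ih hk

lemma qFact_pos (q : ℕ) (hq : 2 ≤ q) (m : ℕ) : 0 < qFact q m := by
  apply Finset.prod_pos
  intro j _
  rw [qInt]
  exact Nat.div_pos (Nat.sub_le_sub_right (Nat.le_self_pow (by omega) q) 1) (by omega)

lemma grass_eq_qBinom (q n i G : ℕ) (hq : 2 ≤ q) (hin : i ≤ n)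
    (hG : G * ∏ j ∈ Finset.range i, (q ^ i - q ^ j) = ∏ j ∈ Finset.range i, (q ^ n - q ^ j)) :
    G = qBinom q n i := by
  rw [prod_sub_pow q hq le_rfl, prod_sub_pow q hq hin] at hG
  set T := ∑ j ∈ Finset.range i, j
  have hT : 0 < q ^ T := Nat.pow_pos (n := T) (by omega)
  have h2 : G * ∏ j ∈ Finset.range i, (q ^ (i - j) - 1)
      = ∏ j ∈ Finset.range i, (q ^ (n - j) - 1) := by
    apply Nat.eq_of_mul_eq_mul_left hT
    calc q ^ T * (G * ∏ j ∈ Finset.range i, (q ^ (i - j) - 1))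
        = G * (q ^ T * ∏ j ∈ Finset.range i, (q ^ (i - j) - 1)) := by ring
      _ = q ^ T * ∏ j ∈ Finset.range i, (q ^ (n - j) - 1) := hG
  have h3 : (∏ j ∈ Finset.range i, (q ^ (i - j) - 1)) = gProd q i := by
    have := prod_shift q (le_refl i)
    simpa [gProd] using this
  have h4 : G * gProd q i * gProd q (n - i) = gProd q n := by
    rw [← prod_shift q hin, ← h3, h2]
  have h5 : G * (qFact q i * qFact q (n - i)) * (q-1)^n = qFact q n * (q-1)^n := by
    have hpow : (q-1)^i * (q-1)^(n-i) = (q-1)^n := by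
      rw [← pow_add]; congr 1; omega
    calc G * (qFact q i * qFact q (n - i)) * (q-1)^n
        = G * (qFact q i * (q-1)^i) * (qFact q (n-i) * (q-1)^(n-i)) := by rw [← hpow]; ring
      _ = G * gProd q i * gProd q (n-i) := by rw [qFact_mul q hq, qFact_mul q hq]
      _ = gProd q n := h4
      _ = qFact q n * (q-1)^n := (qFact_mul q hq n).symm
  have h6 : G * (qFact q i * qFact q (n - i)) = qFact q n :=
    Nat.eq_of_mul_eq_mul_right (Nat.pow_pos (n := n) (by omega)) h5
  have hD : 0 < qFact q i * qFact q (n - i) :=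
    Nat.mul_pos (qFact_pos q hq i) (qFact_pos q hq _)
  rw [qBinom, ← h6, Nat.mul_div_cancel _ hD]

section Counting

variable {F : Type*} [Field F] [Fintype F] {M : Type*} [AddCommGroup M] [Module F M] [Fintype M]

local notation "q" => Fintype.card F

lemma card_filter_mem (p : Submodule F M) :
    (Finset.univ.filter (fun v : M => v ∈ p)).card = q ^ finrank F p := by
  rw [← Fintype.card_subtype, ← card_eq_pow_finrank (K := F) (V := p)]

lemma card_filter_mem_not_mem {w z : Submodule F M} (h : w ≤ z) :
    (Finset.univ.filter (fun v : M => v ∈ z ∧ v ∉ w)).card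
      = q ^ finrank F z - q ^ finrank F w := by
  have he : Finset.univ.filter (fun v : M => v ∈ z ∧ v ∉ w)
      = Finset.univ.filter (fun v : M => v ∈ z) \ Finset.univ.filter (fun v : M => v ∈ w) := by
    ext v; simp only [Finset.mem_filter, Finset.mem_sdiff, Finset.mem_univ, true_and]
  have hsub : Finset.univ.filter (fun v : M => v ∈ w) ⊆ Finset.univ.filter (fun v : M => v ∈ z) := by
    intro v hv
    simp only [Finset.mem_filter, Finset.mem_univ, true_and] at hv ⊢
    exact h hv
  rw [he, Finset.card_sdiff_of_subset hsub, card_filter_mem, card_filter_mem]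

lemma covers_count [Fintype (Submodule F M)] {w y : Submodule F M} (hwy : w ≤ y) :
    ((Finset.univ.filter (fun z : Submodule F M =>
        w ≤ z ∧ z ≤ y ∧ finrank F z = finrank F w + 1)).card)
        * (q ^ (finrank F w + 1) - q ^ (finrank F w))
      = q ^ (finrank F y) - q ^ (finrank F w) := by
  classical
  set t := Finset.univ.filter (fun z : Submodule F M =>
      w ≤ z ∧ z ≤ y ∧ finrank F z = finrank F w + 1) with ht
  set S := Finset.univ.filter (fun v : M => v ∈ y ∧ v ∉ w) with hS
  set φ : M → Submodule F M := fun v => w ⊔ span F {v} with hφ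
  have hmem : ∀ v ∈ S, φ v ∈ t := by
    intro v hv
    simp only [hS, Finset.mem_filter, Finset.mem_univ, true_and] at hv
    obtain ⟨hvy, hvw⟩ := hv
    have h1 : φ v ≤ y := sup_le hwy ((span_singleton_le_iff_mem v y).mpr hvy)
    have h2 : w < φ v := by
      refine lt_of_le_of_ne le_sup_left (fun hEq => hvw ?_)
      rw [hEq]
      exact le_sup_right (a := w) (mem_span_singleton_self v)
    have h3 : finrank F (φ v) ≤ finrank F w + 1 := by
      have heq := Submodule.finrank_sup_add_finrank_inf_eq w (span F {v})
      have hrfl : φ v = w ⊔ span F {v} := rfl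
      rw [hrfl]
      have h4 : finrank F (span F ({v} : Set M)) ≤ 1 := by
        simpa using finrank_span_le_card ({v} : Set M)
      omega
    have h5 : finrank F w + 1 ≤ finrank F (φ v) := Submodule.finrank_lt_finrank_of_lt h2
    simp only [ht, Finset.mem_filter, Finset.mem_univ, true_and]
    exact ⟨le_of_lt h2, h1, le_antisymm h3 h5⟩
  have hcard := Finset.card_eq_sum_card_fiberwise hmem
  have hfiber : ∀ z ∈ t, (S.filter (fun v => φ v = z)).card
      = q ^ (finrank F w + 1) - q ^ (finrank F w) := by
    intro z hz
    simp only [ht, Finset.mem_filter, Finset.mem_univ, true_and] at hz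
    obtain ⟨hwz, hzy, hdz⟩ := hz
    have he : S.filter (fun v => φ v = z)
        = Finset.univ.filter (fun v : M => v ∈ z ∧ v ∉ w) := by
      ext v
      simp only [hS, Finset.mem_filter, Finset.mem_univ, true_and, Finset.filter_filter]
      constructor
      · rintro ⟨⟨hvy, hvw⟩, hφv⟩
        refine ⟨?_, hvw⟩
        rw [← hφv]
        exact le_sup_right (a := w) (mem_span_singleton_self v)
      · rintro ⟨hvz, hvw⟩
        refine ⟨⟨hzy hvz, hvw⟩, ?_⟩
        have h1 : φ v ≤ z := sup_le hwz ((span_singleton_le_iff_mem v z).mpr hvz)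
        have h2 : w < φ v := by
          refine lt_of_le_of_ne le_sup_left (fun hEq => hvw ?_)
          rw [hEq]
          exact le_sup_right (a := w) (mem_span_singleton_self v)
        have h5 : finrank F w + 1 ≤ finrank F (φ v) := Submodule.finrank_lt_finrank_of_lt h2
        exact Submodule.eq_of_le_of_finrank_le h1 (by omega)
    rw [he, card_filter_mem_not_mem hwz, hdz]
  rw [Finset.sum_congr rfl hfiber, Finset.sum_const, smul_eq_mul,
    card_filter_mem_not_mem hwy] at hcard
  rw [← hcard]

def li_equiv {i : ℕ} (W : Submodule F M) (hW : finrank F W = i) :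
    {s : Fin i → M // LinearIndependent F s ∧ span F (Set.range s) = W}
      ≃ {s' : Fin i → W // LinearIndependent F s'} where
  toFun s := ⟨fun j => ⟨s.1 j, by
      have := s.2.2 ▸ subset_span (Set.mem_range_self (f := s.1) j); exact this⟩, by
    apply LinearIndependent.of_comp W.subtype
    exact s.2.1⟩
  invFun s' := ⟨W.subtype ∘ s'.1, by
    constructor
    · exact s'.2.map' W.subtype W.ker_subtype
    · have htop : span F (Set.range s'.1) = ⊤ := by
        apply Submodule.eq_top_of_finrank_eq
        rw [finrank_span_eq_card s'.2, Fintype.card_fin, hW]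
      rw [Set.range_comp, ← Submodule.map_span, htop, Submodule.map_top, range_subtype]⟩
  left_inv s := Subtype.ext rfl
  right_inv s' := Subtype.ext rfl

lemma grass_count [Fintype (Submodule F M)] {i : ℕ} (hi : i ≤ finrank F M) :
    (Finset.univ.filter (fun W : Submodule F M => finrank F W = i)).card
        * ∏ j ∈ Finset.range i, (q ^ i - q ^ j)
      = ∏ j ∈ Finset.range i, (q ^ (finrank F M) - q ^ j) := by
  classical
  set t := Finset.univ.filter (fun W : Submodule F M => finrank F W = i) with ht
  set T := Finset.univ.filter (fun s : Fin i → M => LinearIndependent F s) with hT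
  set ψ : (Fin i → M) → Submodule F M := fun s => span F (Set.range s) with hψ
  have hmem : ∀ s ∈ T, ψ s ∈ t := by
    intro s hs
    simp only [hT, Finset.mem_filter, Finset.mem_univ, true_and] at hs
    simp only [ht, Finset.mem_filter, Finset.mem_univ, true_and]
    rw [hψ]
    simp only []
    rw [finrank_span_eq_card hs, Fintype.card_fin]
  have hcard := Finset.card_eq_sum_card_fiberwise hmem
  have hT_card : T.card = ∏ j ∈ Finset.range i, (q ^ (finrank F M) - q ^ j) := by
    rw [hT, ← Fintype.card_subtype, ← Nat.card_eq_fintype_card, card_linearIndependent hi,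
      ← Fin.prod_univ_eq_prod_range]
  have hfiber : ∀ W ∈ t, (T.filter (fun s => ψ s = W)).card
      = ∏ j ∈ Finset.range i, (q ^ i - q ^ j) := by
    intro W hW
    simp only [ht, Finset.mem_filter, Finset.mem_univ, true_and] at hW
    have : Module.Finite F W := Module.Finite.of_finite (R := F) (M := W)
    rw [hT, Finset.filter_filter, ← Fintype.card_subtype, Fintype.card_congr (li_equiv W hW),
      ← Nat.card_eq_fintype_card]
    rw [card_linearIndependent (by rw [hW])]
    rw [hW, ← Fin.prod_univ_eq_prod_range]
  rw [Finset.sum_congr rfl hfiber, Finset.sum_const, smul_eq_mul, hT_card] at hcard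
  exact hcard.symm

end Counting

end Stmt17Aux


open Stmt17Aux in
lemma dd_apply (y z : X F N) : dd F N y z = if z ≤ y then 1 else 0 := by
  classical
  rw [dd, Finset.sum_apply]
  simp only [Pi.single_apply]
  rw [Finset.sum_ite_eq]
  simp

lemma dimS_le (y : X F N) : dimS F N y ≤ N := by
  have h := Submodule.finrank_le (R := F) y
  rwa [Module.finrank_fintype_fun_eq_card, Fintype.card_fin] at h


/-- With `A⁻ = (A*)⁻¹/(q-1) + (A*)⁻¹L`: `A⁻ y^{↓↓} = (q^{dim y}/(q-1)) y^{↓↓}`;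
consequently `A⁻` is diagonalizable with eigenvalues `q^i/(q-1)` (`0 ≤ i ≤ N`), and the
eigenspace for `q^i/(q-1)` has dimension `binom(N,i)_q`. -/
theorem stmt_17 (hN : 1 ≤ N) :
    let q : ℂ := (Fintype.card F : ℂ)
    let Am : Matrix (X F N) (X F N) ℂ := (q - 1)⁻¹ • (Astar F N)⁻¹ + (Astar F N)⁻¹ * L F N
    (∀ y : X F N, Am.mulVec (dd F N y) = (q ^ (dimS F N y) / (q - 1)) • dd F N y) ∧
    (∀ i : ℕ, i ≤ N →
      Module.finrank ℂ ↥(Module.End.eigenspace Am.mulVecLin (q ^ i / (q - 1))) =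
        qBinom (Fintype.card F) N i) ∧
    (⨆ i ∈ Finset.range (N + 1), Module.End.eigenspace Am.mulVecLin (q ^ i / (q - 1))) = ⊤ := by
  classical
  intro q Am
  have hq : q = (Fintype.card F : ℂ) := rfl
  have hq2 : 2 ≤ Fintype.card F := Fintype.one_lt_card
  have hq0 : q ≠ 0 := by
    rw [hq]
    exact Nat.cast_ne_zero.mpr (by omega)
  have hq1 : q - 1 ≠ 0 := by
    rw [sub_ne_zero, hq]
    intro h
    have : (Fintype.card F : ℂ) = ((1 : ℕ) : ℂ) := by simpa using h
    have := Nat.cast_inj (R := ℂ).mp this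
    omega
  have hAinv : (Astar F N)⁻¹ = Matrix.diagonal (fun y => q ^ (dimS F N y)) := by
    apply Matrix.inv_eq_right_inv
    rw [Astar, Matrix.diagonal_mul_diagonal]
    rw [show (fun y => (Fintype.card F : ℂ) ^ (-(dimS F N y : ℤ)) * q ^ (dimS F N y))
        = fun _ => (1:ℂ) from funext fun y => by
      rw [← hq, _root_.zpow_neg, zpow_natCast]
      exact inv_mul_cancel₀ (pow_ne_zero _ hq0), Matrix.diagonal_one]
  -- Part 1
  have part1 : ∀ y : X F N, Am.mulVec (dd F N y)
      = (q ^ (dimS F N y) / (q - 1)) • dd F N y := by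
    intro y
    have hAm : Am.mulVec (dd F N y) = (q-1)⁻¹ • ((Astar F N)⁻¹.mulVec (dd F N y))
        + (Astar F N)⁻¹.mulVec ((L F N).mulVec (dd F N y)) := by
      show ((q - 1)⁻¹ • (Astar F N)⁻¹ + (Astar F N)⁻¹ * L F N).mulVec _ = _
      rw [Matrix.add_mulVec, Matrix.smul_mulVec, Matrix.mulVec_mulVec]
    funext w
    set c := ((Finset.univ.filter (fun z : X F N =>
        w ≤ z ∧ z ≤ y ∧ Module.finrank F z = Module.finrank F w + 1)).card) with hc_def
    have hsum : ((L F N).mulVec (dd F N y)) w = (c : ℂ) := by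
      rw [Matrix.mulVec, dotProduct]
      calc ∑ z, L F N w z * dd F N y z
          = ∑ z, (if w ≤ z ∧ z ≤ y ∧ Module.finrank F z = Module.finrank F w + 1
              then (1:ℂ) else 0) := by
            refine Finset.sum_congr rfl fun z _ => ?_
            rw [dd_apply]
            show (if Covers F N z w then (1:ℂ) else 0) * _ = _
            by_cases hA : Covers F N z w <;> by_cases hB : z ≤ y <;>
              · obtain ⟨h1, h2⟩ | h := em (Covers F N z w) |>.imp (fun h => h) id <;>
                simp_all [Covers, dimS] <;>
                simp only [if_neg (show ¬(w ≤ z ∧ _) from fun h => hA h.1 h.2)] <;>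
                exact if_neg (fun h => hA h.1 h.2)
        _ = (c : ℂ) := by rw [Finset.sum_boole, hc_def]
    rw [hAm]
    simp only [Pi.add_apply, Pi.smul_apply, hAinv, Matrix.mulVec_diagonal, smul_eq_mul,
      hsum, dd_apply]
    by_cases hw : w ≤ y
    · have hdle : dimS F N w ≤ dimS F N y := Submodule.finrank_mono hw
      have hcount := Stmt17Aux.covers_count (F := F) (M := Fin N → F) hw
      rw [← hc_def] at hcount
      have hle1 : (Fintype.card F) ^ (Module.finrank F w)
          ≤ (Fintype.card F) ^ (Module.finrank F w + 1) :=
        Nat.pow_le_pow_right (by omega) (by omega)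
      have hle2 : (Fintype.card F) ^ (Module.finrank F w)
          ≤ (Fintype.card F) ^ (Module.finrank F y) :=
        Nat.pow_le_pow_right (by omega) hdle
      have hcc := congrArg (Nat.cast (R := ℂ)) hcount
      push_cast [Nat.cast_sub hle1, Nat.cast_sub hle2] at hcc
      rw [← hq] at hcc
      simp only [if_pos hw, mul_one]
      have hdS : dimS F N w = Module.finrank F w := rfl
      have hdS' : dimS F N y = Module.finrank F y := rfl
      rw [hdS, hdS']
      field_simp
      ring_nf
      ring_nf at hcc
      linear_combination hcc
    · have hc0 : c = 0 := by
        rw [hc_def, Finset.card_eq_zero]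
        ext z
        simp only [Finset.mem_filter, Finset.mem_univ, true_and, Finset.notMem_empty,
          iff_false]
        rintro ⟨h1, h2, h3⟩
        exact hw (le_trans h1 h2)
      rw [hc0, if_neg hw]
      simp
  refine ⟨part1, ?_⟩
  -- setup for parts 2 and 3
  set f := Am.mulVecLin with hf
  set E : ℕ → Submodule ℂ (X F N → ℂ) := fun i => Module.End.eigenspace f (q ^ i / (q - 1))
    with hE
  set tS : ℕ → Finset (X F N) := fun i => Finset.univ.filter (fun y => dimS F N y = i) with htS
  set S : ℕ → Submodule ℂ (X F N → ℂ) := fun i =>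
    Submodule.span ℂ (((tS i).image (dd F N) : Finset (X F N → ℂ)) : Set (X F N → ℂ)) with hS
  have hSE : ∀ i, S i ≤ E i := by
    intro i
    rw [hS]
    apply Submodule.span_le.mpr
    intro x hx
    simp only [Finset.coe_image, Set.mem_image, Finset.mem_coe, htS, Finset.mem_filter,
      Finset.mem_univ, true_and] at hx
    obtain ⟨y, hy, rfl⟩ := hx
    rw [SetLike.mem_coe, hE, Module.End.mem_eigenspace_iff, hf, Matrix.mulVecLin_apply,
      part1 y, hy]
  have hdd_mem : ∀ y : X F N, dd F N y ∈ S (dimS F N y) := by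
    intro y
    apply Submodule.subset_span
    simp only [Finset.coe_image, Set.mem_image, Finset.mem_coe, htS, Finset.mem_filter,
      Finset.mem_univ, true_and]
    exact ⟨y, rfl, rfl⟩
  have hsupS : (⨆ i ∈ Finset.range (N + 1), S i) = ⊤ := by
    rw [Submodule.eq_top_iff']
    have hsingle : ∀ n : ℕ, ∀ y : X F N, dimS F N y = n →
        Pi.single y (1:ℂ) ∈ ⨆ i ∈ Finset.range (N + 1), S i := by
      intro n
      induction n using Nat.strong_induction_on with
      | _ n ih =>
        intro y hy
        have hdd : dd F N y ∈ ⨆ i ∈ Finset.range (N + 1), S i := by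
          apply Submodule.mem_iSup_of_mem (dimS F N y)
          apply Submodule.mem_iSup_of_mem (Finset.mem_range.mpr (by
            have := dimS_le F N y; omega))
          exact hdd_mem y
        have hself : y ∈ Finset.univ.filter (fun z : X F N => z ≤ y) := by
          simp
        have hsplit : dd F N y = Pi.single y (1:ℂ)
            + ∑ z ∈ (Finset.univ.filter (fun z : X F N => z ≤ y)).erase y,
              Pi.single z (1:ℂ) := by
          rw [dd, ← Finset.add_sum_erase _ _ hself]
        have hrest : ∑ z ∈ (Finset.univ.filter (fun z : X F N => z ≤ y)).erase y,
            Pi.single z (1:ℂ) ∈ ⨆ i ∈ Finset.range (N + 1), S i := by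
          apply Submodule.sum_mem
          intro z hz
          have hz' := Finset.mem_of_mem_erase hz
          simp only [Finset.mem_filter, Finset.mem_univ, true_and] at hz'
          have hne : z ≠ y := Finset.ne_of_mem_erase hz
          have hlt : z < y := lt_of_le_of_ne hz' hne
          have hdim : dimS F N z < n := by
            rw [← hy]
            exact Submodule.finrank_lt_finrank_of_lt hlt
          exact ih _ hdim z rfl
        have : Pi.single y (1:ℂ) = dd F N y
            - ∑ z ∈ (Finset.univ.filter (fun z : X F N => z ≤ y)).erase y,
              Pi.single z (1:ℂ) := by
          rw [hsplit]; ring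
        rw [this]
        exact Submodule.sub_mem _ hdd hrest
    intro x
    have hx : x = ∑ y : X F N, x y • (Pi.single y (1:ℂ) : X F N → ℂ) := by
      funext z
      rw [Finset.sum_apply]
      simp only [Pi.smul_apply, Pi.single_apply, smul_eq_mul, mul_ite, mul_one, mul_zero]
      rw [Finset.sum_ite_eq]
      simp
    rw [hx]
    clear hx
    exact Submodule.sum_mem _ fun y _ =>
      Submodule.smul_mem _ _ (hsingle (dimS F N y) y rfl)
  have part3 : (⨆ i ∈ Finset.range (N + 1), E i) = ⊤ := by
    rw [eq_top_iff, ← hsupS]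
    exact iSup_mono fun i => iSup_mono fun _ => hSE i
  refine ⟨?_, part3⟩
  -- Part 2: eigenspace dimensions
  have hcardX : Module.finrank ℂ (X F N → ℂ) = Fintype.card (X F N) := by
    rw [Module.finrank_fintype_fun_eq_card]
  have hn_sum : ∑ i ∈ Finset.range (N + 1), (tS i).card = Fintype.card (X F N) := by
    rw [← Finset.card_univ]
    rw [Finset.card_eq_sum_card_fiberwise (f := dimS F N) (t := Finset.range (N + 1))
      (fun y _ => Finset.mem_range.mpr (by have := dimS_le F N y; omega))]
  -- finrank of a finite sup is at most the sum of finranks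
  have hsup_le : ∀ (s : Finset ℕ) (p : ℕ → Submodule ℂ (X F N → ℂ)),
      Module.finrank ℂ ↥(⨆ i ∈ s, p i) ≤ ∑ i ∈ s, Module.finrank ℂ ↥(p i) := by
    intro s p
    induction s using Finset.induction_on with
    | empty => simp
    | @insert a s ha ih =>
      rw [Finset.iSup_insert, Finset.sum_insert ha]
      have hle := Submodule.finrank_sup_add_finrank_inf_eq (p a) (⨆ i ∈ s, p i)
      omega
  -- q-binomial count of subspaces of each dimension
  have hfr : Module.finrank F (Fin N → F) = N := by
    rw [Module.finrank_fintype_fun_eq_card, Fintype.card_fin]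
  have hgrass : ∀ i, i ≤ N → (tS i).card = qBinom (Fintype.card F) N i := by
    intro i hi
    have hg := Stmt17Aux.grass_count (F := F) (M := Fin N → F) (i := i) (by rw [hfr]; exact hi)
    rw [hfr] at hg
    have hcards : (tS i).card
        = (Finset.univ.filter (fun W : Submodule F (Fin N → F) =>
            Module.finrank F W = i)).card := rfl
    rw [hcards]
    exact Stmt17Aux.grass_eq_qBinom (Fintype.card F) N i _ hq2 hi hg
  have hfinrank_S_le : ∀ i, Module.finrank ℂ ↥(S i) ≤ (tS i).card := by
    intro i
    calc Module.finrank ℂ ↥(S i) ≤ ((tS i).image (dd F N)).card :=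
          finrank_span_finset_le_card _
      _ ≤ (tS i).card := Finset.card_image_le
  have hcard_le : Fintype.card (X F N) ≤ ∑ i ∈ Finset.range (N+1), Module.finrank ℂ ↥(S i) := by
    have h1 : Module.finrank ℂ ↥(⨆ i ∈ Finset.range (N+1), S i) = Fintype.card (X F N) := by
      rw [hsupS, finrank_top, hcardX]
    rw [← h1]
    exact hsup_le _ _
  have hS_eq : ∀ i ∈ Finset.range (N+1), Module.finrank ℂ ↥(S i) = (tS i).card := by
    by_contra hcon
    push_neg at hcon
    obtain ⟨j, hj, hne⟩ := hcon
    have hlt : ∑ i ∈ Finset.range (N+1), Module.finrank ℂ ↥(S i)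
        < ∑ i ∈ Finset.range (N+1), (tS i).card :=
      Finset.sum_lt_sum (fun i _ => hfinrank_S_le i)
        ⟨j, hj, lt_of_le_of_ne (hfinrank_S_le j) hne⟩
    omega
  have hinj : Function.Injective (fun i : Fin (N+1) => q ^ (i:ℕ) / (q - 1)) := by
    intro a b hab
    simp only at hab
    have h1 : q ^ (a:ℕ) = q ^ (b:ℕ) := by
      field_simp at hab
      exact hab
    rw [hq] at h1
    have h2 : ((Fintype.card F ^ (a:ℕ) : ℕ) : ℂ) = ((Fintype.card F ^ (b:ℕ) : ℕ) : ℂ) := by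
      push_cast
      exact h1
    have h3 := Nat.cast_inj (R := ℂ) |>.mp h2
    exact Fin.ext (Nat.pow_right_injective hq2 h3)
  have hind : iSupIndep (fun i : Fin (N+1) => E (i:ℕ)) :=
    (Module.End.eigenspaces_iSupIndep f).comp hinj
  have hsupE : ⨆ i : Fin (N+1), E (i:ℕ) = ⊤ := by
    rw [eq_top_iff, ← part3]
    refine iSup₂_le fun i hi => ?_
    exact le_iSup (fun j : Fin (N+1) => E (j:ℕ)) ⟨i, Finset.mem_range.mp hi⟩
  have hInternal := DirectSum.isInternal_submodule_of_iSupIndep_of_iSup_eq_top hind hsupE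
  have hEsum : ∑ i : Fin (N+1), Module.finrank ℂ ↥(E (i:ℕ)) = Fintype.card (X F N) := by
    have e1 : DirectSum (Fin (N+1)) (fun i => ↥(E (i:ℕ))) ≃ₗ[ℂ] (X F N → ℂ) :=
      LinearEquiv.ofBijective (DirectSum.coeLinearMap _) hInternal
    have h2 := e1.finrank_eq
    rw [Module.finrank_directSum] at h2
    rw [h2, hcardX]
  have hrange_sum : ∑ i ∈ Finset.range (N+1), Module.finrank ℂ ↥(E i)
      = Fintype.card (X F N) := by
    rw [← hEsum, ← Fin.sum_univ_eq_sum_range (fun i => Module.finrank ℂ ↥(E i)) (N+1)]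
  have hE_ge : ∀ i ∈ Finset.range (N+1), (tS i).card ≤ Module.finrank ℂ ↥(E i) := by
    intro i hi
    rw [← hS_eq i hi]
    exact Submodule.finrank_mono (hSE i)
  have hE_eq : ∀ i ∈ Finset.range (N+1), Module.finrank ℂ ↥(E i) = (tS i).card := by
    by_contra hcon
    push_neg at hcon
    obtain ⟨j, hj, hne⟩ := hcon
    have hlt : ∑ i ∈ Finset.range (N+1), (tS i).card
        < ∑ i ∈ Finset.range (N+1), Module.finrank ℂ ↥(E i) :=
      Finset.sum_lt_sum hE_ge ⟨j, hj, lt_of_le_of_ne (hE_ge j hj) (Ne.symm hne)⟩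
    omega
  intro i hi
  exact (hE_eq i (Finset.mem_range.mpr (by omega))).trans (hgrass i hi)



end
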